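/- Let k >= 1 and let G be a d-regular cyclically (d-1+2k)-edge-connected graph of even order, and let X be a set of d-1+k edges of G such that G - X has an independent set I with |I| > |V(G)|/2. Then the vertices of V(G) - I induce at most k-1 edges in G - X. -/

import Mathlib

open Finset

private lemma card_pairs_eq_sum' {V : Type*} [Fintype V] (P : V → V → Prop)
    [∀ u v, Decidable (P u v)] :
    ((Finset.univ : Finset (V × V)).filter fun p => P p.1 p.2).card
      = ∑ u, (Finset.univ.filter fun v => P u v).card := by
  rw [Finset.card_filter, ← Finset.univ_product_univ, Finset.sum_product]
  exact Finset.sum_congr rfl fun u _ => (Finset.card_filter _ _).symm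

private lemma pairs_two' {V : Type*} [Fintype V] [DecidableEq V] (s : Finset (Sym2 V))
    (hs : ∀ e ∈ s, ¬ e.IsDiag) :
    ((Finset.univ : Finset (V × V)).filter fun p => Sym2.mk p.1 p.2 ∈ s).card = 2 * s.card := by
  rw [Finset.card_eq_sum_card_fiberwise (f := fun p : V × V => Sym2.mk p.1 p.2) (t := s)
      (s := (Finset.univ : Finset (V × V)).filter fun p => Sym2.mk p.1 p.2 ∈ s)
      (fun p hp => (Finset.mem_filter.mp hp).2)]
  rw [Finset.sum_congr rfl (g := fun _ => 2) ?_, Finset.sum_const, smul_eq_mul, mul_comm]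
  intro e he
  revert he
  induction e using Sym2.ind with
  | _ a b =>
  intro he
  have hab : a ≠ b := fun h => hs _ he (by simp [h])
  have hset : (((Finset.univ : Finset (V × V)).filter fun p => Sym2.mk p.1 p.2 ∈ s).filter
      fun p => Sym2.mk p.1 p.2 = s(a, b)) = {(a, b), (b, a)} := by
    ext ⟨x, y⟩
    simp only [Finset.mem_filter, Finset.mem_univ, true_and, Finset.mem_insert,
      Finset.mem_singleton, Prod.mk.injEq, Sym2.eq_iff]
    constructor
    · rintro ⟨-, h⟩; tauto
    · rintro (⟨rfl, rfl⟩ | ⟨rfl, rfl⟩)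
      · exact ⟨he, Or.inl ⟨rfl, rfl⟩⟩
      · exact ⟨by rwa [Sym2.eq_swap], Or.inr ⟨rfl, rfl⟩⟩
  rw [hset, Finset.card_insert_of_notMem (by simp [Prod.ext_iff, hab]), Finset.card_singleton]

theorem stmt_4 {V : Type*} [Fintype V] (G : SimpleGraph V) (d k : ℕ) (hk : 1 ≤ k)
    (hreg : ∀ v : V, (G.neighborSet v).ncard = d)
    (hcyc : ∀ S : Set V, ¬ (G.induce S).IsAcyclic → ¬ (G.induce (Sᶜ : Set V)).IsAcyclic →
      d - 1 + 2 * k ≤ {e | e ∈ G.edgeSet ∧ ∃ u ∈ S, ∃ w ∈ (Sᶜ : Set V), e = s(u, w)}.ncard)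
    (heven : Even (Fintype.card V))
    (X : Set (Sym2 V)) (hX : X ⊆ G.edgeSet) (hXcard : X.ncard = d - 1 + k)
    (I : Set V) (hI : I.Pairwise (fun a b => ¬ (G.deleteEdges X).Adj a b))
    (hIbig : 2 * I.ncard > Fintype.card V) :
    {e | e ∈ (G.deleteEdges X).edgeSet ∧ ∀ v ∈ e, v ∉ I}.ncard ≤ k - 1 := by
  classical
  set EJ : Set (Sym2 V) := {e | e ∈ (G.deleteEdges X).edgeSet ∧ ∀ v ∈ e, v ∉ I} with hEJ
  set n := Fintype.card V with hn
  -- membership characterization of EJ on pairs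
  have hEJmem : ∀ x y : V, (s(x, y) ∈ EJ ↔ G.Adj x y ∧ s(x, y) ∉ X ∧ x ∉ I ∧ y ∉ I) := by
    intro x y
    simp only [hEJ, Set.mem_setOf_eq, SimpleGraph.edgeSet_deleteEdges, Set.mem_diff,
      SimpleGraph.mem_edgeSet, Sym2.mem_iff, forall_eq_or_imp, forall_eq]
    tauto
  -- degrees
  have hdeg : ∀ v : V, (Finset.univ.filter fun w => G.Adj v w).card = d := by
    intro v
    rw [← hreg v, Set.ncard_eq_toFinset_card']
    congr 1
    ext w
    simp [SimpleGraph.mem_neighborSet]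
  set If : Finset V := I.toFinset with hIf
  have hIcard : I.ncard = If.card := Set.ncard_eq_toFinset_card' I
  -- the three pair counts
  set m := ((Finset.univ : Finset (V × V)).filter fun p =>
      G.Adj p.1 p.2 ∧ Sym2.mk p.1 p.2 ∉ X ∧ p.1 ∈ I ∧ p.2 ∉ I).card with hm
  set m' := ((Finset.univ : Finset (V × V)).filter fun p =>
      G.Adj p.1 p.2 ∧ Sym2.mk p.1 p.2 ∉ X ∧ p.1 ∉ I ∧ p.2 ∈ I).card with hm'
  -- m = m' via swap
  have hmm : m = m' := by
    rw [hm, hm']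
    apply Finset.card_bij (fun p _ => p.swap)
    · rintro ⟨x, y⟩ hp
      simp only [Finset.mem_filter, Finset.mem_univ, true_and] at hp ⊢
      obtain ⟨h1, h2, h3, h4⟩ := hp
      exact ⟨h1.symm, by rwa [Prod.swap_prod_mk, Sym2.eq_swap (a := y)], h4, h3⟩
    · rintro ⟨x, y⟩ _ ⟨z, w⟩ _ h
      simp only [Prod.swap_prod_mk, Prod.mk.injEq] at h ⊢
      exact ⟨h.2, h.1⟩
    · rintro ⟨x, y⟩ hp
      refine ⟨(y, x), ?_, rfl⟩
      simp only [Finset.mem_filter, Finset.mem_univ, true_and] at hp ⊢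
      obtain ⟨h1, h2, h3, h4⟩ := hp
      exact ⟨h1.symm, by rwa [Sym2.eq_swap (a := y)], h4, h3⟩
  -- 2|X| pairs
  have hXP : ((Finset.univ : Finset (V × V)).filter fun p => Sym2.mk p.1 p.2 ∈ X.toFinset).card
      = 2 * X.ncard := by
    rw [pairs_two' X.toFinset
      (fun e he => G.not_isDiag_of_mem_edgeSet (hX (Set.mem_toFinset.mp he))),
      Set.ncard_eq_toFinset_card']
  -- 2 EJ pairs
  have hCP : ((Finset.univ : Finset (V × V)).filter fun p => Sym2.mk p.1 p.2 ∈ EJ.toFinset).card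
      = 2 * EJ.ncard := by
    rw [pairs_two' EJ.toFinset
      (fun e he => (G.deleteEdges X).not_isDiag_of_mem_edgeSet (Set.mem_toFinset.mp he).1),
      Set.ncard_eq_toFinset_card']
  -- Fact 1 : d * |I| ≤ 2|X| + m
  have h1 : d * If.card ≤ 2 * X.ncard + m := by
    have hstep : ∀ u ∈ If, (Finset.univ.filter fun w => G.Adj u w).card ≤
        (Finset.univ.filter fun v => Sym2.mk u v ∈ X.toFinset).card
        + (Finset.univ.filter fun v =>
            G.Adj u v ∧ Sym2.mk u v ∉ X ∧ u ∈ I ∧ v ∉ I).card := by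
      intro u hu
      refine le_trans (Finset.card_le_card ?_) (Finset.card_union_le _ _)
      intro v hv
      simp only [Finset.mem_filter, Finset.mem_univ, true_and, Finset.mem_union,
        Set.mem_toFinset] at hv ⊢
      by_cases hxv : s(u, v) ∈ X
      · exact Or.inl hxv
      · refine Or.inr ⟨hv, hxv, Set.mem_toFinset.mp hu, fun hvI => ?_⟩
        exact hI (Set.mem_toFinset.mp hu) hvI (G.ne_of_adj hv)
          (SimpleGraph.deleteEdges_adj.mpr ⟨hv, hxv⟩)
    have hsum1 : ∑ u ∈ If, (Finset.univ.filter fun v => Sym2.mk u v ∈ X.toFinset).card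
        ≤ 2 * X.ncard := by
      rw [← hXP, card_pairs_eq_sum' (fun u v => Sym2.mk u v ∈ X.toFinset)]
      exact Finset.sum_le_sum_of_subset (Finset.subset_univ If)
    have hsum2 : ∑ u ∈ If, (Finset.univ.filter fun v =>
        G.Adj u v ∧ Sym2.mk u v ∉ X ∧ u ∈ I ∧ v ∉ I).card = m := by
      rw [hm, card_pairs_eq_sum' (fun u v => G.Adj u v ∧ Sym2.mk u v ∉ X ∧ u ∈ I ∧ v ∉ I)]
      apply Finset.sum_subset (Finset.subset_univ If)
      intro u _ hu
      rw [Finset.card_eq_zero, Finset.filter_eq_empty_iff]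
      intro v _
      simp only [not_and]
      intro _ _ huI
      exact absurd (Set.mem_toFinset.mpr huI) hu
    calc d * If.card = ∑ u ∈ If, (Finset.univ.filter fun w => G.Adj u w).card := by
          rw [Finset.sum_congr rfl fun u _ => hdeg u, Finset.sum_const, smul_eq_mul, mul_comm]
      _ ≤ ∑ u ∈ If, ((Finset.univ.filter fun v => Sym2.mk u v ∈ X.toFinset).card
            + (Finset.univ.filter fun v =>
                G.Adj u v ∧ Sym2.mk u v ∉ X ∧ u ∈ I ∧ v ∉ I).card) :=
          Finset.sum_le_sum hstep
      _ = _ + _ := Finset.sum_add_distrib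
      _ ≤ 2 * X.ncard + m := Nat.add_le_add hsum1 hsum2.le
  -- Fact 3 : m' + 2 EJ ≤ d * (n - |I|)
  have h3 : m' + 2 * EJ.ncard ≤ d * (n - If.card) := by
    have hstep : ∀ u ∈ Ifᶜ,
        (Finset.univ.filter fun v => G.Adj u v ∧ Sym2.mk u v ∉ X ∧ u ∉ I ∧ v ∈ I).card
        + (Finset.univ.filter fun v => Sym2.mk u v ∈ EJ.toFinset).card ≤ d := by
      intro u _
      rw [← hdeg u]
      rw [← Finset.card_union_of_disjoint]
      · apply Finset.card_le_card
        intro v hv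
        simp only [Finset.mem_union, Finset.mem_filter, Finset.mem_univ, true_and,
          Set.mem_toFinset, hEJmem] at hv ⊢
        rcases hv with h | h
        · exact h.1
        · exact h.1
      · rw [Finset.disjoint_filter]
        intro v _ hv
        simp only [Set.mem_toFinset, hEJmem]
        intro h
        exact h.2.2.2 hv.2.2.2
    have hsum1 : ∑ u ∈ Ifᶜ, (Finset.univ.filter fun v =>
        G.Adj u v ∧ Sym2.mk u v ∉ X ∧ u ∉ I ∧ v ∈ I).card = m' := by
      rw [hm', card_pairs_eq_sum' (fun u v => G.Adj u v ∧ Sym2.mk u v ∉ X ∧ u ∉ I ∧ v ∈ I)]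
      apply Finset.sum_subset (Finset.subset_univ _)
      intro u _ hu
      rw [Finset.card_eq_zero, Finset.filter_eq_empty_iff]
      intro v _
      simp only [not_and]
      intro _ _ huI
      simp only [Finset.mem_compl, not_not, hIf, Set.mem_toFinset] at hu
      exact (huI hu).elim
    have hsum2 : ∑ u ∈ Ifᶜ, (Finset.univ.filter fun v =>
        Sym2.mk u v ∈ EJ.toFinset).card = 2 * EJ.ncard := by
      rw [← hCP, card_pairs_eq_sum' (fun u v => Sym2.mk u v ∈ EJ.toFinset)]
      apply Finset.sum_subset (Finset.subset_univ _)
      intro u _ hu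
      rw [Finset.card_eq_zero, Finset.filter_eq_empty_iff]
      intro v _
      rw [Set.mem_toFinset, hEJmem]
      intro h
      simp only [Finset.mem_compl, not_not, hIf, Set.mem_toFinset] at hu
      exact h.2.2.1 hu
    calc m' + 2 * EJ.ncard
        = ∑ u ∈ Ifᶜ, ((Finset.univ.filter fun v =>
            G.Adj u v ∧ Sym2.mk u v ∉ X ∧ u ∉ I ∧ v ∈ I).card
          + (Finset.univ.filter fun v => Sym2.mk u v ∈ EJ.toFinset).card) := by
          rw [Finset.sum_add_distrib, hsum1, hsum2]
      _ ≤ ∑ _u ∈ Ifᶜ, d := Finset.sum_le_sum hstep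
      _ = d * (n - If.card) := by
          rw [Finset.sum_const, smul_eq_mul, Finset.card_compl, mul_comm]
  -- arithmetic wrap-up
  have haLe : If.card ≤ n := by simpa [hn] using Finset.card_le_univ If
  obtain ⟨c, hc⟩ := heven
  have hgap : (n - If.card) + 2 ≤ If.card := by
    rw [hIcard] at hIbig; omega
  have hmul : d * ((n - If.card) + 2) ≤ d * If.card := Nat.mul_le_mul_left d hgap
  rw [Nat.mul_add] at hmul
  rcases Nat.eq_zero_or_pos d with hd | hd
  · subst hd
    simp only [Nat.zero_mul] at h3
    omega
  · set a1 := d * If.card with ha1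
    set a2 := d * (n - If.card) with ha2
    omega
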